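/- arXiv:2202.07602 — 8 statements merged into one kernel-verified Lean document; each statement's English description precedes it below -/
import Mathlib

section
/- Let A be an invertible n×n real matrix and b ∈ ℝⁿ. For i = 0, …, N−1 let R_i (size n_i × n), R̃_i (size n_i × n) and R_{i,e} (size m_i × n) be real matrices satisfying: (H1) Σ_{i=0}^{N−1} R̃_iᵀ R_i = I_n; (H2) R_i A = R_i A (R_iᵀ R_i + R_{i,e}ᵀ R_{i,e}) for each i; (H3) each local matrix A_i := R_i A R_iᵀ is invertible. Define M_{RAS}^{-1} := Σ_{i=0}^{N−1} R̃_iᵀ A_i^{-1} R_i. Then for any z^{(k)} ∈ ℝⁿ, the RAS update z^{(k+1)} := Σ_{i=0}^{N−1} R̃_iᵀ A_i^{-1} ( R_i b − R_i A R_{i,e}ᵀ R_{i,e} z^{(k)} ) satisfies the Richardson-process formula z^{(k+1)} = z^{(k)} + M_{RAS}^{-1} ( b − A z^{(k)} ). -/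
open Matrix

/-- The restricted additive Schwarz (RAS) update for `A z = b` can be written
as a Richardson process `z^{(k+1)} = z^{(k)} + M_{RAS}⁻¹ (b − A z^{(k)})` with
`M_{RAS}⁻¹ = Σᵢ R̃ᵢᵀ Aᵢ⁻¹ Rᵢ`. -/
theorem ras_is_richardson
    (n N : ℕ) (A : Matrix (Fin n) (Fin n) ℝ) (hA : IsUnit A) (b : Fin n → ℝ)
    (ni mi : Fin N → ℕ)
    (R : ∀ i : Fin N, Matrix (Fin (ni i)) (Fin n) ℝ)
    (Rtil : ∀ i : Fin N, Matrix (Fin (ni i)) (Fin n) ℝ)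
    (Rie : ∀ i : Fin N, Matrix (Fin (mi i)) (Fin n) ℝ)
    (H1 : ∑ i : Fin N, (Rtil i)ᵀ * R i = 1)
    (H2 : ∀ i : Fin N, R i * A = R i * A * ((R i)ᵀ * R i + (Rie i)ᵀ * Rie i))
    (H3 : ∀ i : Fin N, IsUnit (R i * A * (R i)ᵀ))
    (Minv : Matrix (Fin n) (Fin n) ℝ)
    (hM : Minv = ∑ i : Fin N, (Rtil i)ᵀ * (R i * A * (R i)ᵀ)⁻¹ * R i)
    (zk zk1 : Fin n → ℝ)
    (hupdate : zk1 = ∑ i : Fin N, (Rtil i)ᵀ *ᵥ ((R i * A * (R i)ᵀ)⁻¹ *ᵥ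
      (R i *ᵥ b - R i *ᵥ (A *ᵥ ((Rie i)ᵀ *ᵥ (Rie i *ᵥ zk))))) ) :
    zk1 = zk + Minv *ᵥ (b - A *ᵥ zk) := by
  have key : ∀ i : Fin N, (Rtil i)ᵀ *ᵥ ((R i * A * (R i)ᵀ)⁻¹ *ᵥ
      (R i *ᵥ b - R i *ᵥ (A *ᵥ ((Rie i)ᵀ *ᵥ (Rie i *ᵥ zk)))))
      = ((Rtil i)ᵀ * R i) *ᵥ zk
        + ((Rtil i)ᵀ * (R i * A * (R i)ᵀ)⁻¹ * R i) *ᵥ (b - A *ᵥ zk) := by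
    intro i
    have hinv : (R i * A * (R i)ᵀ)⁻¹ * (R i * A * (R i)ᵀ) = 1 :=
      nonsing_inv_mul _ ((isUnit_iff_isUnit_det _).mp (H3 i))
    have h2 : R i *ᵥ (A *ᵥ ((Rie i)ᵀ *ᵥ (Rie i *ᵥ zk)))
        = (R i * A) *ᵥ zk - (R i * A * ((R i)ᵀ * R i)) *ᵥ zk := by
      have := congrArg (fun M => M *ᵥ zk) (H2 i)
      simp only [Matrix.mul_add, Matrix.add_mulVec] at this
      rw [show R i *ᵥ (A *ᵥ ((Rie i)ᵀ *ᵥ (Rie i *ᵥ zk)))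
          = (R i * A * ((Rie i)ᵀ * Rie i)) *ᵥ zk by
        simp [mulVec_mulVec, Matrix.mul_assoc]]
      rw [this]; abel
    rw [h2]
    have : (R i *ᵥ b - ((R i * A) *ᵥ zk - (R i * A * ((R i)ᵀ * R i)) *ᵥ zk))
        = (R i * A * (R i)ᵀ) *ᵥ (R i *ᵥ zk) + R i *ᵥ (b - A *ᵥ zk) := by
      simp only [mulVec_mulVec, mulVec_sub, Matrix.mul_assoc]
      module
    rw [this, mulVec_add, mulVec_mulVec, hinv, one_mulVec, mulVec_add]
    simp [mulVec_mulVec, Matrix.mul_assoc]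
  rw [hupdate]
  simp only [key]
  have hs : ∀ (f : Fin N → Matrix (Fin n) (Fin n) ℝ) (v : Fin n → ℝ),
      (∑ i, f i) *ᵥ v = ∑ i, f i *ᵥ v := by
    intro f v
    ext j
    simp only [mulVec, dotProduct, Finset.sum_apply, Matrix.sum_apply, Finset.sum_mul]
    rw [Finset.sum_comm]
  rw [Finset.sum_add_distrib, ← hs, ← hs, H1, ← hM, one_mulVec]
end

section
/- Under the hypotheses (H1), (H2), (H3) of the RAS/Richardson setting (Σ_i R̃_iᵀ R_i = I_n; R_i A = R_i A (R_iᵀ R_i + R_{i,e}ᵀ R_{i,e}); A_i := R_i A R_iᵀ invertible; M_{RAS}^{-1} := Σ_i R̃_iᵀ A_i^{-1} R_i), let R_Γ be an n_Γ × n real matrix satisfying R_{i,e}ᵀ R_{i,e} R_Γᵀ R_Γ = R_{i,e}ᵀ R_{i,e} for every i. Then the Richardson iteration z^{(k+1)} = z^{(k)} + M_{RAS}^{-1}(b − A z^{(k)}) restricted to the interface satisfies R_Γ z^{(k+1)} = P (R_Γ z^{(k)}) + c, where P := R_Γ (I − M_{RAS}^{-1} A) R_Γᵀ and c := R_Γ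 M_{RAS}^{-1} b. -/
open Matrix

/-- Restricting the RAS/Richardson iteration
`z^{(k+1)} = z^{(k)} + M_{RAS}⁻¹(b − A z^{(k)})` to the interface `Γ` gives an
affine iteration `R_Γ z^{(k+1)} = P (R_Γ z^{(k)}) + c` with iteration-independent
error operator `P = R_Γ (I − M_{RAS}⁻¹ A) R_Γᵀ` and `c = R_Γ M_{RAS}⁻¹ b`. -/
theorem ras_interface_iteration
    (n N nΓ : ℕ) (A : Matrix (Fin n) (Fin n) ℝ) (hA : IsUnit A) (b : Fin n → ℝ)
    (ni mi : Fin N → ℕ)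
    (R : ∀ i : Fin N, Matrix (Fin (ni i)) (Fin n) ℝ)
    (Rtil : ∀ i : Fin N, Matrix (Fin (ni i)) (Fin n) ℝ)
    (Rie : ∀ i : Fin N, Matrix (Fin (mi i)) (Fin n) ℝ)
    (H1 : ∑ i : Fin N, (Rtil i)ᵀ * R i = 1)
    (H2 : ∀ i : Fin N, R i * A = R i * A * ((R i)ᵀ * R i + (Rie i)ᵀ * Rie i))
    (H3 : ∀ i : Fin N, IsUnit (R i * A * (R i)ᵀ))
    (Minv : Matrix (Fin n) (Fin n) ℝ)
    (hM : Minv = ∑ i : Fin N, (Rtil i)ᵀ * (R i * A * (R i)ᵀ)⁻¹ * R i)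
    (RΓ : Matrix (Fin nΓ) (Fin n) ℝ)
    (hΓ : ∀ i : Fin N, (Rie i)ᵀ * Rie i * (RΓᵀ * RΓ) = (Rie i)ᵀ * Rie i)
    (P : Matrix (Fin nΓ) (Fin nΓ) ℝ) (hP : P = RΓ * (1 - Minv * A) * RΓᵀ)
    (c : Fin nΓ → ℝ) (hc : c = RΓ *ᵥ (Minv *ᵥ b))
    (zk zk1 : Fin n → ℝ) (hupdate : zk1 = zk + Minv *ᵥ (b - A *ᵥ zk)) :
    RΓ *ᵥ zk1 = P *ᵥ (RΓ *ᵥ zk) + c := by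
  have hterm : ∀ i : Fin N,
      (Rtil i)ᵀ * (R i * A * (R i)ᵀ)⁻¹ * R i * A
        = (Rtil i)ᵀ * R i
          + (Rtil i)ᵀ * ((R i * A * (R i)ᵀ)⁻¹ * (R i * A * ((Rie i)ᵀ * Rie i))) := by
    intro i
    have hinv : (R i * A * (R i)ᵀ)⁻¹ * (R i * A * (R i)ᵀ) = 1 :=
      nonsing_inv_mul _ ((isUnit_iff_isUnit_det _).mp (H3 i))
    have key : (R i * A * (R i)ᵀ)⁻¹ * (R i * A)
        = R i + (R i * A * (R i)ᵀ)⁻¹ * (R i * A * ((Rie i)ᵀ * Rie i)) := by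
      nth_rewrite 2 [H2 i]
      rw [Matrix.mul_add (R i * A), Matrix.mul_add,
        ← Matrix.mul_assoc (R i * A) (R i)ᵀ (R i),
        ← Matrix.mul_assoc ((R i * A * (R i)ᵀ)⁻¹) (R i * A * (R i)ᵀ) (R i),
        hinv, Matrix.one_mul]
    rw [Matrix.mul_assoc ((Rtil i)ᵀ * (R i * A * (R i)ᵀ)⁻¹) (R i) A,
      Matrix.mul_assoc ((Rtil i)ᵀ) ((R i * A * (R i)ᵀ)⁻¹) (R i * A), key, Matrix.mul_add]
  have hE : 1 - Minv * A
      = -(∑ i : Fin N, (Rtil i)ᵀ * ((R i * A * (R i)ᵀ)⁻¹ * (R i * A * ((Rie i)ᵀ * Rie i)))) := by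
    rw [hM, Finset.sum_mul, Finset.sum_congr rfl fun i _ => hterm i,
      Finset.sum_add_distrib, H1]
    abel
  have hkey : (1 - Minv * A) * (RΓᵀ * RΓ) = 1 - Minv * A := by
    rw [hE, neg_mul, Finset.sum_mul, neg_inj]
    refine Finset.sum_congr rfl fun i _ => ?_
    rw [Matrix.mul_assoc ((Rtil i)ᵀ)
        ((R i * A * (R i)ᵀ)⁻¹ * (R i * A * ((Rie i)ᵀ * Rie i))) (RΓᵀ * RΓ),
      Matrix.mul_assoc ((R i * A * (R i)ᵀ)⁻¹) (R i * A * ((Rie i)ᵀ * Rie i)) (RΓᵀ * RΓ),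
      Matrix.mul_assoc (R i * A) ((Rie i)ᵀ * Rie i) (RΓᵀ * RΓ), hΓ i]
  have hPR : P * RΓ = RΓ * (1 - Minv * A) := by
    rw [hP, Matrix.mul_assoc (RΓ * (1 - Minv * A)) RΓᵀ RΓ,
      Matrix.mul_assoc RΓ (1 - Minv * A) (RΓᵀ * RΓ), hkey]
  have hfinal : P *ᵥ (RΓ *ᵥ zk) = RΓ *ᵥ zk - (RΓ * (Minv * A)) *ᵥ zk := by
    rw [Matrix.mulVec_mulVec, hPR, Matrix.mul_sub, Matrix.mul_one, Matrix.sub_mulVec]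
  rw [hupdate, hc, hfinal]
  simp only [Matrix.mulVec_add, Matrix.mulVec_sub, Matrix.mulVec_mulVec, Matrix.mul_assoc]
  abel
end

section
/- In the RAS/Richardson setting with N = 2 partitions (hypotheses: Σ_{i=0}^{1} R̃_iᵀ R_i = I_n; R_i A = R_i A (R_iᵀ R_i + R_{i,e}ᵀ R_{i,e}); A_i := R_i A R_iᵀ invertible; M_{RAS}^{-1} := Σ_i R̃_iᵀ A_i^{-1} R_i), assume in addition that R_{0,e} R_{0,e}ᵀ = I, R_{1,e} R_{1,e}ᵀ = I, R_{1,e} R_{0,e}ᵀ = 0, R_{0,e} R̃_0ᵀ = 0 and R_{1,e} R̃_1ᵀ = 0. Then the interface error operator has antidiagonal block structure: R_{0,e} (I − M_{RAS}^{-1} A) R_{0,e}ᵀ = 0 and R_{1,e} (I − M_{RAS}^{-1} A) R_{1,e}ᵀ = 0, while R_{0,e} (I − M_{RAS}^{-1} A) R_{1,e}ᵀ = − R_{0,e} R̃_1ᵀ A_1^{-1} R_1 A R_{1,e}ᵀ and R_{1,e} (I − M_{RAS}^{-1} A) R_{0,e}ᵀ = − R_{1,e} R̃_0ᵀ A_0^{-1}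 R_0 A R_{0,e}ᵀ; hence the interface errors satisfy (e_0, e_1)^{(k+1)} = [[0, P_0],[P_1, 0]] (e_0, e_1)^{(k)} for these blocks P_0, P_1. -/
open Matrix

/-- For the RAS/Richardson process with two partitions whose interfaces are
disjoint, the interface error operator has antidiagonal block structure: the
diagonal blocks of `R_{i,e} (I − M_{RAS}⁻¹ A) R_{j,e}ᵀ` vanish, the
antidiagonal blocks are `P₀ = −R_{0,e} R̃₁ᵀ A₁⁻¹ R₁ A R_{1,e}ᵀ` and
`P₁ = −R_{1,e} R̃₀ᵀ A₀⁻¹ R₀ A R_{0,e}ᵀ`, and the interface errors satisfy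
`(e₀, e₁)^{(k+1)} = [[0, P₀], [P₁, 0]] (e₀, e₁)^{(k)}`. -/
theorem ras_two_partitions_interface_error_operator
    (n n₀ n₁ m₀ m₁ : ℕ) (A : Matrix (Fin n) (Fin n) ℝ) (hA : IsUnit A)
    (R0 Rtil0 : Matrix (Fin n₀) (Fin n) ℝ) (R1 Rtil1 : Matrix (Fin n₁) (Fin n) ℝ)
    (R0e : Matrix (Fin m₀) (Fin n) ℝ) (R1e : Matrix (Fin m₁) (Fin n) ℝ)
    (H1 : Rtil0ᵀ * R0 + Rtil1ᵀ * R1 = 1)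
    (H2₀ : R0 * A = R0 * A * (R0ᵀ * R0 + R0eᵀ * R0e))
    (H2₁ : R1 * A = R1 * A * (R1ᵀ * R1 + R1eᵀ * R1e))
    (H3₀ : IsUnit (R0 * A * R0ᵀ)) (H3₁ : IsUnit (R1 * A * R1ᵀ))
    (Minv : Matrix (Fin n) (Fin n) ℝ)
    (hM : Minv = Rtil0ᵀ * (R0 * A * R0ᵀ)⁻¹ * R0 + Rtil1ᵀ * (R1 * A * R1ᵀ)⁻¹ * R1)
    (h0e : R0e * R0eᵀ = 1) (h1e : R1e * R1eᵀ = 1) (h10 : R1e * R0eᵀ = 0)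
    (h0til : R0e * Rtil0ᵀ = 0) (h1til : R1e * Rtil1ᵀ = 0) :
    R0e * (1 - Minv * A) * R0eᵀ = 0 ∧
    R1e * (1 - Minv * A) * R1eᵀ = 0 ∧
    R0e * (1 - Minv * A) * R1eᵀ = -(R0e * Rtil1ᵀ * (R1 * A * R1ᵀ)⁻¹ * R1 * A * R1eᵀ) ∧
    R1e * (1 - Minv * A) * R0eᵀ = -(R1e * Rtil0ᵀ * (R0 * A * R0ᵀ)⁻¹ * R0 * A * R0eᵀ) ∧
    (∀ u : Fin n → ℝ,
      R0e *ᵥ ((1 - Minv * A) *ᵥ u) =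
        (R0e * (1 - Minv * A) * R1eᵀ) *ᵥ (R1e *ᵥ u) ∧
      R1e *ᵥ ((1 - Minv * A) *ᵥ u) =
        (R1e * (1 - Minv * A) * R0eᵀ) *ᵥ (R0e *ᵥ u)) := by
  have h01 : R0e * R1eᵀ = 0 := by
    have := congrArg Matrix.transpose h10
    simpa [Matrix.transpose_mul] using this
  have hA1 : (R1 * A * R1ᵀ)⁻¹ * (R1 * A * R1ᵀ) = 1 :=
    Matrix.nonsing_inv_mul _ ((Matrix.isUnit_iff_isUnit_det _).mp H3₁)
  have hA0 : (R0 * A * R0ᵀ)⁻¹ * (R0 * A * R0ᵀ) = 1 :=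
    Matrix.nonsing_inv_mul _ ((Matrix.isUnit_iff_isUnit_det _).mp H3₀)
  have hR1A : (R1 * A * R1ᵀ)⁻¹ * (R1 * A) =
      R1 + (R1 * A * R1ᵀ)⁻¹ * (R1 * A * R1eᵀ) * R1e := by
    calc (R1 * A * R1ᵀ)⁻¹ * (R1 * A)
        = (R1 * A * R1ᵀ)⁻¹ * (R1 * A * (R1ᵀ * R1 + R1eᵀ * R1e)) := by rw [← H2₁]
      _ = (R1 * A * R1ᵀ)⁻¹ * (R1 * A * R1ᵀ) * R1
            + (R1 * A * R1ᵀ)⁻¹ * (R1 * A * R1eᵀ) * R1e := by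
          rw [Matrix.mul_add (R1 * A), ← Matrix.mul_assoc (R1 * A) R1ᵀ R1,
            ← Matrix.mul_assoc (R1 * A) R1eᵀ R1e, Matrix.mul_add,
            ← Matrix.mul_assoc, ← Matrix.mul_assoc]
          simp [Matrix.mul_assoc]
      _ = _ := by rw [hA1, Matrix.one_mul]
  have hR0A : (R0 * A * R0ᵀ)⁻¹ * (R0 * A) =
      R0 + (R0 * A * R0ᵀ)⁻¹ * (R0 * A * R0eᵀ) * R0e := by
    calc (R0 * A * R0ᵀ)⁻¹ * (R0 * A)
        = (R0 * A * R0ᵀ)⁻¹ * (R0 * A * (R0ᵀ * R0 + R0eᵀ * R0e)) := by rw [← H2₀]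
      _ = (R0 * A * R0ᵀ)⁻¹ * (R0 * A * R0ᵀ) * R0
            + (R0 * A * R0ᵀ)⁻¹ * (R0 * A * R0eᵀ) * R0e := by
          rw [Matrix.mul_add (R0 * A), ← Matrix.mul_assoc (R0 * A) R0ᵀ R0,
            ← Matrix.mul_assoc (R0 * A) R0eᵀ R0e, Matrix.mul_add,
            ← Matrix.mul_assoc, ← Matrix.mul_assoc]
          simp [Matrix.mul_assoc]
      _ = _ := by rw [hA0, Matrix.one_mul]
  have h1' : Rtil1ᵀ * R1 = 1 - Rtil0ᵀ * R0 := eq_sub_of_add_eq' H1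
  have h0' : Rtil0ᵀ * R0 = 1 - Rtil1ᵀ * R1 := eq_sub_of_add_eq H1
  -- key identity 0
  have step1 : R0e * Minv = R0e * Rtil1ᵀ * (R1 * A * R1ᵀ)⁻¹ * R1 := by
    rw [hM, Matrix.mul_add]
    simp only [← Matrix.mul_assoc]
    rw [h0til]
    simp
  have step4 : R0e * Rtil1ᵀ * R1 = R0e := by
    rw [Matrix.mul_assoc, h1', Matrix.mul_sub, Matrix.mul_one, ← Matrix.mul_assoc, h0til]
    simp
  have E0 : R0e * (1 - Minv * A) =
      -(R0e * Rtil1ᵀ * (R1 * A * R1ᵀ)⁻¹ * R1 * A * R1eᵀ) * R1e := by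
    have step2 : R0e * (Minv * A) =
        R0e * Rtil1ᵀ * ((R1 * A * R1ᵀ)⁻¹ * (R1 * A)) := by
      rw [← Matrix.mul_assoc, step1]
      simp [Matrix.mul_assoc]
    rw [Matrix.mul_sub, Matrix.mul_one, step2, hR1A, Matrix.mul_add, ← Matrix.mul_assoc, step4]
    have h : R0e * Rtil1ᵀ * ((R1 * A * R1ᵀ)⁻¹ * (R1 * A * R1eᵀ)) =
        R0e * Rtil1ᵀ * (R1 * A * R1ᵀ)⁻¹ * R1 * A * R1eᵀ := by
      simp [Matrix.mul_assoc]
    rw [h, Matrix.neg_mul]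
    abel
  -- key identity 1
  have step1' : R1e * Minv = R1e * Rtil0ᵀ * (R0 * A * R0ᵀ)⁻¹ * R0 := by
    rw [hM, Matrix.mul_add]
    simp only [← Matrix.mul_assoc]
    rw [h1til]
    simp
  have step4' : R1e * Rtil0ᵀ * R0 = R1e := by
    rw [Matrix.mul_assoc, h0', Matrix.mul_sub, Matrix.mul_one, ← Matrix.mul_assoc, h1til]
    simp
  have E1 : R1e * (1 - Minv * A) =
      -(R1e * Rtil0ᵀ * (R0 * A * R0ᵀ)⁻¹ * R0 * A * R0eᵀ) * R0e := by
    have step2 : R1e * (Minv * A) =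
        R1e * Rtil0ᵀ * ((R0 * A * R0ᵀ)⁻¹ * (R0 * A)) := by
      rw [← Matrix.mul_assoc, step1']
      simp [Matrix.mul_assoc]
    rw [Matrix.mul_sub, Matrix.mul_one, step2, hR0A, Matrix.mul_add, ← Matrix.mul_assoc, step4']
    have h : R1e * Rtil0ᵀ * ((R0 * A * R0ᵀ)⁻¹ * (R0 * A * R0eᵀ)) =
        R1e * Rtil0ᵀ * (R0 * A * R0ᵀ)⁻¹ * R0 * A * R0eᵀ := by
      simp [Matrix.mul_assoc]
    rw [h, Matrix.neg_mul]
    abel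
  have c3 : R0e * (1 - Minv * A) * R1eᵀ =
      -(R0e * Rtil1ᵀ * (R1 * A * R1ᵀ)⁻¹ * R1 * A * R1eᵀ) := by
    rw [E0, Matrix.mul_assoc, h1e, Matrix.mul_one]
  have c4 : R1e * (1 - Minv * A) * R0eᵀ =
      -(R1e * Rtil0ᵀ * (R0 * A * R0ᵀ)⁻¹ * R0 * A * R0eᵀ) := by
    rw [E1, Matrix.mul_assoc, h0e, Matrix.mul_one]
  refine ⟨?_, ?_, c3, c4, ?_⟩
  · rw [E0, Matrix.mul_assoc, h10, Matrix.mul_zero]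
  · rw [E1, Matrix.mul_assoc, h01, Matrix.mul_zero]
  · intro u
    have K0 : R0e * (1 - Minv * A) = (R0e * (1 - Minv * A) * R1eᵀ) * R1e := by
      rw [c3, E0]
    have K1 : R1e * (1 - Minv * A) = (R1e * (1 - Minv * A) * R0eᵀ) * R0e := by
      rw [c4, E1]
    constructor
    · rw [Matrix.mulVec_mulVec, Matrix.mulVec_mulVec]
      conv_lhs => rw [K0]
    · rw [Matrix.mulVec_mulVec, Matrix.mulVec_mulVec]
      conv_lhs => rw [K1]
end

section
/- Let Δt, L₁, L₂, C, G be positive real numbers and let P be the 3×3 real matrix P = [[0, −Δt/L₁, Δt/L₁], [−L₂/Δt + (L₂C/Δt² + L₂G/Δt + 1)/(C/Δt + G), 0, 0], [0, 0, 0]]. Then the characteristic polynomial of P is X·(X² + Δt²/(L₁(C + GΔt))), and the eigenvalues of P over ℂ are exactly 0, i·Δt/√(L₁(C + GΔt)) and −i·Δt/√(L₁(C + GΔt)). -/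
open Matrix Polynomial

/-- Characteristic polynomial and complex eigenvalues of the interface error
operator of the dynamic iteration with RAS splitting for the first RLC circuit
example. -/
theorem first_example_error_operator_eigenvalues
    (Δt L₁ L₂ C G : ℝ) (hΔt : 0 < Δt) (hL₁ : 0 < L₁) (hL₂ : 0 < L₂)
    (hC : 0 < C) (hG : 0 < G)
    (P : Matrix (Fin 3) (Fin 3) ℝ)
    (hP : P = !![0, -Δt / L₁, Δt / L₁;
                 -L₂ / Δt + (L₂ * C / Δt ^ 2 + L₂ * G / Δt + 1) / (C / Δt + G), 0, 0;
                 0, 0, 0]) :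
    P.charpoly = X * (X ^ 2 + Polynomial.C (Δt ^ 2 / (L₁ * (C + G * Δt)))) ∧
    spectrum ℂ (P.map (algebraMap ℝ ℂ)) =
      {0, Complex.I * ((Δt : ℂ) / (Real.sqrt (L₁ * (C + G * Δt)) : ℂ)),
       -(Complex.I * ((Δt : ℂ) / (Real.sqrt (L₁ * (C + G * Δt)) : ℂ)))} := by
  set a : ℝ := Δt / L₁ with ha
  set b : ℝ := -L₂ / Δt + (L₂ * C / Δt ^ 2 + L₂ * G / Δt + 1) / (C / Δt + G) with hb
  set d : ℝ := Δt ^ 2 / (L₁ * (C + G * Δt)) with hd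
  have hΔt0 : Δt ≠ 0 := ne_of_gt hΔt
  have hL₁0 : L₁ ≠ 0 := ne_of_gt hL₁
  have hcg : 0 < C + G * Δt := by positivity
  have hcg0 : C + G * Δt ≠ 0 := ne_of_gt hcg
  have hcg' : C / Δt + G ≠ 0 := by positivity
  have hab : a * b = d := by
    rw [ha, hb, hd]
    field_simp
    ring
  have hPa : P = !![0, -a, a; b, 0, 0; 0, 0, 0] := by
    rw [hP, ha, neg_div]
  clear_value a b d
  constructor
  · rw [Matrix.charpoly, Matrix.det_fin_three]
    simp [charmatrix, hPa, Matrix.vecHead, Matrix.vecTail]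
    ring_nf
    rw [mul_assoc, ← C_mul, hab]
  · -- spectrum part
    set s : ℝ := Real.sqrt (L₁ * (C + G * Δt)) with hs
    have hspos : 0 < s := Real.sqrt_pos.mpr (by positivity)
    have hs0 : (s : ℂ) ≠ 0 := by exact_mod_cast ne_of_gt hspos
    have hs2 : (s : ℂ) ^ 2 = ((L₁ * (C + G * Δt) : ℝ) : ℂ) := by
      have : s ^ 2 = L₁ * (C + G * Δt) := Real.sq_sqrt (by positivity)
      exact_mod_cast this
    set z : ℂ := Complex.I * ((Δt : ℂ) / (s : ℂ)) with hz
    have hz2 : z ^ 2 = -(d : ℂ) := by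
      rw [hz, hd]
      push_cast
      rw [mul_pow, Complex.I_sq, div_pow, hs2]
      push_cast
      ring
    have hdet : ∀ x : ℂ,
        (x • (1 : Matrix (Fin 3) (Fin 3) ℂ) - P.map (algebraMap ℝ ℂ)).det
          = x * (x - z) * (x + z) := by
      intro x
      rw [Matrix.det_fin_three]
      simp [Matrix.one_apply, hPa, Matrix.vecHead, Matrix.vecTail]
      have hab' : ((a : ℝ) : ℂ) * ((b : ℝ) : ℂ) = (d : ℂ) := by exact_mod_cast congrArg (Complex.ofReal) hab
      linear_combination x * hab' + x * hz2
    ext x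
    have hmem : x ∈ spectrum ℂ (P.map (algebraMap ℝ ℂ)) ↔
        (x • (1 : Matrix (Fin 3) (Fin 3) ℂ) - P.map (algebraMap ℝ ℂ)).det = 0 := by
      rw [spectrum.mem_iff, Algebra.algebraMap_eq_smul_one, Matrix.isUnit_iff_isUnit_det,
        not_iff_comm, isUnit_iff_ne_zero]
    rw [hmem, hdet x, mul_eq_zero, mul_eq_zero, sub_eq_zero]
    simp only [Set.mem_insert_iff, Set.mem_singleton_iff]
    constructor
    · rintro ((h | h) | h)
      · exact Or.inl h
      · exact Or.inr (Or.inl h)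
      · exact Or.inr (Or.inr (by linear_combination h))
    · rintro (h | h | h)
      · exact Or.inl (Or.inl h)
      · exact Or.inl (Or.inr h)
      · exact Or.inr (by rw [h]; ring)
end

section
/- Let Δt, L₁, L₂, C, G be positive real numbers, let P be the 3×3 real matrix P = [[0, −Δt/L₁, Δt/L₁], [−L₂/Δt + (L₂C/Δt² + L₂G/Δt + 1)/(C/Δt + G), 0, 0], [0, 0, 0]], and set Δt₀ := (L₁G + √((L₁G)² + 4L₁C))/2. Then the spectral radius of P equals Δt/√(L₁(C + GΔt)), and: ρ(P) < 1 if and only if Δt < Δt₀; ρ(P) = 1 if and only if Δt = Δt₀; and ρ(P) > 1 if and only if Δt > Δt₀. -/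
open Matrix

set_option maxHeartbeats 1000000 in
/-- Spectral radius of the interface error operator for the first RLC circuit
example, and the convergence/stagnation/divergence trichotomy in terms of the
critical time step `Δt₀ = (L₁G + √((L₁G)² + 4L₁C))/2`. -/
theorem first_example_spectral_radius_trichotomy
    (Δt L₁ L₂ C G : ℝ) (hΔt : 0 < Δt) (hL₁ : 0 < L₁) (hL₂ : 0 < L₂)
    (hC : 0 < C) (hG : 0 < G)
    (P : Matrix (Fin 3) (Fin 3) ℝ)
    (hP : P = !![0, -Δt / L₁, Δt / L₁;
                 -L₂ / Δt + (L₂ * C / Δt ^ 2 + L₂ * G / Δt + 1) / (C / Δt + G), 0, 0;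
                 0, 0, 0])
    (Δt₀ : ℝ) (hΔt₀ : Δt₀ = (L₁ * G + Real.sqrt ((L₁ * G) ^ 2 + 4 * L₁ * C)) / 2) :
    spectralRadius ℂ (P.map (algebraMap ℝ ℂ)) =
        ENNReal.ofReal (Δt / Real.sqrt (L₁ * (C + G * Δt))) ∧
    (spectralRadius ℂ (P.map (algebraMap ℝ ℂ)) < 1 ↔ Δt < Δt₀) ∧
    (spectralRadius ℂ (P.map (algebraMap ℝ ℂ)) = 1 ↔ Δt = Δt₀) ∧
    (1 < spectralRadius ℂ (P.map (algebraMap ℝ ℂ)) ↔ Δt₀ < Δt) := by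
  have hden : (0:ℝ) < C + G * Δt := by positivity
  have hLden : (0:ℝ) < L₁ * (C + G * Δt) := by positivity
  set s : ℝ := Real.sqrt (L₁ * (C + G * Δt)) with hs_def
  have hspos : 0 < s := Real.sqrt_pos.mpr hLden
  have hs2 : s ^ 2 = L₁ * (C + G * Δt) := Real.sq_sqrt hLden.le
  set μ : ℝ := Δt / s with hμ_def
  have hμpos : 0 < μ := by positivity
  -- simplify entry b
  have hb : -L₂ / Δt + (L₂ * C / Δt ^ 2 + L₂ * G / Δt + 1) / (C / Δt + G)
      = Δt / (C + G * Δt) := by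
    have h1 : C / Δt + G = (C + G * Δt) / Δt := by field_simp
    rw [h1]
    field_simp
    ring
  -- the complexified matrix
  have hQ : P.map (algebraMap ℝ ℂ) =
      !![0, -((Δt / L₁ : ℝ) : ℂ), ((Δt / L₁ : ℝ) : ℂ); ((Δt / (C + G * Δt) : ℝ) : ℂ), 0, 0; 0, 0, 0] := by
    rw [hP]
    ext i j
    fin_cases i <;> fin_cases j <;>
      simp [Matrix.map_apply, hb, Matrix.vecHead, Matrix.vecTail] <;> push_cast <;> ring
  -- the key relation
  have hrel : ((Δt / L₁ : ℝ) : ℂ) * ((Δt / (C + G * Δt) : ℝ) : ℂ) = (μ : ℂ) ^ 2 := by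
    have : (Δt / L₁) * (Δt / (C + G * Δt)) = μ ^ 2 := by
      rw [hμ_def, div_pow, hs2]
      field_simp
    exact_mod_cast congrArg (fun x : ℝ => (x : ℂ)) this
  -- spectrum
  have hspec : spectrum ℂ (P.map (algebraMap ℝ ℂ)) =
      {0, Complex.I * (μ : ℂ), -(Complex.I * (μ : ℂ))} := by
    ext z
    rw [hQ, spectrum.mem_iff, Matrix.isUnit_iff_isUnit_det, isUnit_iff_ne_zero, not_not]
    have hmat : (algebraMap ℂ (Matrix (Fin 3) (Fin 3) ℂ) z -
        !![0, -((Δt / L₁ : ℝ) : ℂ), ((Δt / L₁ : ℝ) : ℂ); ((Δt / (C + G * Δt) : ℝ) : ℂ), 0, 0; 0, 0, 0]) =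
        !![z, ((Δt / L₁ : ℝ) : ℂ), -((Δt / L₁ : ℝ) : ℂ);
           -((Δt / (C + G * Δt) : ℝ) : ℂ), z, 0; 0, 0, z] := by
      ext i j
      fin_cases i <;> fin_cases j <;>
        simp [Matrix.algebraMap_matrix_apply, Matrix.vecHead, Matrix.vecTail]
    rw [hmat]
    have hdet : (!![z, ((Δt / L₁ : ℝ) : ℂ), -((Δt / L₁ : ℝ) : ℂ);
           -((Δt / (C + G * Δt) : ℝ) : ℂ), z, 0; 0, 0, z]).det
        = z * (z - Complex.I * (μ : ℂ)) * (z + Complex.I * (μ : ℂ)) := by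
      have step1 : (!![z, ((Δt / L₁ : ℝ) : ℂ), -((Δt / L₁ : ℝ) : ℂ);
           -((Δt / (C + G * Δt) : ℝ) : ℂ), z, 0; 0, 0, z]).det
          = z ^ 3 + ((Δt / L₁ : ℝ) : ℂ) * ((Δt / (C + G * Δt) : ℝ) : ℂ) * z := by
        simp [Matrix.det_fin_three, Matrix.vecHead, Matrix.vecTail]
        ring
      rw [step1, hrel]
      linear_combination ((μ:ℂ) ^ 2 * z) * Complex.I_sq
    rw [hdet]
    simp only [mul_eq_zero, Set.mem_insert_iff, Set.mem_singleton_iff]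
    constructor
    · rintro ((h | h) | h)
      · exact Or.inl h
      · exact Or.inr (Or.inl (by linear_combination h))
      · exact Or.inr (Or.inr (by linear_combination h))
    · rintro (h | h | h) <;> subst h <;> ring_nf <;> simp
  -- spectral radius value
  have hnorm : ‖Complex.I * (μ : ℂ)‖₊ = Real.toNNReal μ := by
    rw [nnnorm_mul, Complex.nnnorm_I, one_mul, Complex.nnnorm_real,
      Real.nnnorm_of_nonneg hμpos.le, Real.toNNReal_of_nonneg hμpos.le]
  have hsr : spectralRadius ℂ (P.map (algebraMap ℝ ℂ)) = ENNReal.ofReal μ := by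
    rw [spectralRadius, hspec]
    rw [iSup_insert, iSup_insert, iSup_singleton]
    rw [nnnorm_neg, hnorm]
    simp [ENNReal.ofReal]
  clear hP hb hrel hnorm hspec hQ
  set r : ℝ := Real.sqrt ((L₁ * G) ^ 2 + 4 * L₁ * C) with hr_def
  have hr2 : r ^ 2 = (L₁ * G) ^ 2 + 4 * L₁ * C := Real.sq_sqrt (by positivity)
  have hr0 : 0 ≤ r := Real.sqrt_nonneg _
  have hrgt : L₁ * G < r := by nlinarith [mul_pos hL₁ hG, mul_pos hL₁ hC]
  have h2 : 0 < Δt - (L₁ * G - r) / 2 := by nlinarith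
  have key_lt : μ < 1 ↔ Δt < Δt₀ := by
    rw [hμ_def, div_lt_one hspos, hs_def, Real.lt_sqrt hΔt.le, hΔt₀]
    constructor
    · intro h
      by_contra h'
      push_neg at h'
      have h1 : 0 ≤ Δt - (L₁ * G + r) / 2 := by linarith
      nlinarith [mul_nonneg h1 h2.le]
    · intro h
      have h1 : 0 < (L₁ * G + r) / 2 - Δt := by linarith
      nlinarith [mul_pos h1 h2]
  have key_gt : 1 < μ ↔ Δt₀ < Δt := by
    rw [hμ_def, one_lt_div hspos, hs_def, Real.sqrt_lt' hΔt, hΔt₀]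
    constructor
    · intro h
      by_contra h'
      push_neg at h'
      have h1 : 0 ≤ (L₁ * G + r) / 2 - Δt := by linarith
      nlinarith [mul_nonneg h1 h2.le]
    · intro h
      have h1 : 0 < Δt - (L₁ * G + r) / 2 := by linarith
      nlinarith [mul_pos h1 h2]
  have key_eq : μ = 1 ↔ Δt = Δt₀ := by
    constructor
    · intro h
      rcases lt_trichotomy Δt Δt₀ with h' | h' | h'
      · exact absurd (key_lt.mpr h') (by simp [h])
      · exact h'
      · exact absurd (key_gt.mpr h') (by simp [h])
    · intro h
      rcases lt_trichotomy μ 1 with h' | h' | h'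
      · exact absurd (key_lt.mp h') (by simp [h])
      · exact h'
      · exact absurd (key_gt.mp h') (by simp [h])
  refine ⟨hsr, ?_, ?_, ?_⟩ <;> rw [hsr]
  · rw [ENNReal.ofReal_lt_one]; exact key_lt
  · rw [ENNReal.ofReal_eq_one]; exact key_eq
  · rw [ENNReal.one_lt_ofReal]; exact key_gt
end

section
/- Let Δt, L₁, L₂, C, G be positive real numbers and let P be the 3×3 real matrix P = [[0, −Δt/L₁, Δt/L₁], [(L₂C/Δt² + L₂G/Δt + 1)/(C/Δt + G), 0, 0], [0, 0, 0]]. Then the characteristic polynomial of P is X·(X² + L₂/L₁ + Δt²/(L₁(C + GΔt))), and the eigenvalues of P over ℂ are exactly 0, i·√(L₂/L₁ + Δt²/(L₁(C + GΔt))) and −i·√(L₂/L₁ + Δt²/(L₁(C + GΔt))). -/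
open Matrix Polynomial

/-- Characteristic polynomial and complex eigenvalues of the interface error
operator of the dynamic iteration with RAS splitting for the second RLC
circuit example (the index-2 DAE). -/
theorem second_example_error_operator_eigenvalues
    (Δt L₁ L₂ C G : ℝ) (hΔt : 0 < Δt) (hL₁ : 0 < L₁) (hL₂ : 0 < L₂)
    (hC : 0 < C) (hG : 0 < G)
    (P : Matrix (Fin 3) (Fin 3) ℝ)
    (hP : P = !![0, -Δt / L₁, Δt / L₁;
                 (L₂ * C / Δt ^ 2 + L₂ * G / Δt + 1) / (C / Δt + G), 0, 0;
                 0, 0, 0]) :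
    P.charpoly = X * (X ^ 2 +
        Polynomial.C (L₂ / L₁ + Δt ^ 2 / (L₁ * (C + G * Δt)))) ∧
    spectrum ℂ (P.map (algebraMap ℝ ℂ)) =
      {0, Complex.I * (Real.sqrt (L₂ / L₁ + Δt ^ 2 / (L₁ * (C + G * Δt))) : ℂ),
       -(Complex.I * (Real.sqrt (L₂ / L₁ + Δt ^ 2 / (L₁ * (C + G * Δt))) : ℂ))} := by
  set b : ℝ := (L₂ * C / Δt ^ 2 + L₂ * G / Δt + 1) / (C / Δt + G) with hb
  set a : ℝ := L₂ / L₁ + Δt ^ 2 / (L₁ * (C + G * Δt)) with ha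
  have ha0 : 0 < a := by rw [ha]; positivity
  have key : Δt / L₁ * b = a := by
    rw [hb, ha]
    have h1 : C / Δt + G > 0 := by positivity
    have h2 : C + G * Δt > 0 := by positivity
    field_simp
  constructor
  · rw [Matrix.charpoly, Matrix.det_fin_three]
    simp [charmatrix_apply_eq, charmatrix_apply_ne, hP, Matrix.vecHead, Matrix.vecTail,
      Polynomial.C_neg, _root_.map_mul, map_div₀, map_inv₀]
    have hCa : Polynomial.C a = Polynomial.C (Δt / L₁) * Polynomial.C b := by
      rw [← Polynomial.C_mul, key]
    rw [neg_div, Polynomial.C_neg, hCa]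
    ring
  · set s : ℂ := Complex.I * (Real.sqrt a : ℂ) with hs
    have hsq : s ^ 2 = -(a : ℂ) := by
      rw [hs, mul_pow, Complex.I_sq, ← Complex.ofReal_pow, Real.sq_sqrt ha0.le]
      ring
    have hbc : ((-Δt / L₁ : ℝ) : ℂ) * ((b : ℝ) : ℂ) = -(a : ℂ) := by
      push_cast
      rw [show (-Δt / L₁ : ℂ) * b = -((Δt / L₁ : ℂ) * b) by ring]
      norm_cast
      rw [key]
    have hM : P.map (algebraMap ℝ ℂ) =
        !![0, -(Δt : ℂ) / (L₁ : ℂ), (Δt : ℂ) / (L₁ : ℂ); ((b : ℝ) : ℂ), 0, 0; 0, 0, 0] := by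
      subst hP
      ext i j
      fin_cases i <;> fin_cases j <;>
        simp [Matrix.map_apply, Matrix.vecHead, Matrix.vecTail, Complex.ofReal_neg, neg_div]
    ext z
    rw [spectrum.mem_iff, Matrix.isUnit_iff_isUnit_det, isUnit_iff_ne_zero, not_not]
    have hdet : ((algebraMap ℂ (Matrix (Fin 3) (Fin 3) ℂ)) z - P.map (algebraMap ℝ ℂ)).det
        = z * (z - s) * (z + s) := by
      have hbc' : -(Δt : ℂ) / (L₁ : ℂ) * ((b : ℝ) : ℂ) = -(a : ℂ) := by
        push_cast at hbc ⊢
        linear_combination hbc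
      rw [hM, Matrix.det_fin_three]
      simp [Matrix.algebraMap_matrix_apply, Matrix.vecHead, Matrix.vecTail]
      linear_combination -(z : ℂ) * hbc' + z * hsq
    rw [hdet]
    simp only [Set.mem_insert_iff, Set.mem_singleton_iff, mul_eq_zero, sub_eq_zero,
      add_eq_zero_iff_eq_neg]
    tauto
end

section
/- Let Δt, L₁, L₂, C, G be positive real numbers with L₂ ≥ L₁, and let P be the 3×3 real matrix P = [[0, −Δt/L₁, Δt/L₁], [(L₂C/Δt² + L₂G/Δt + 1)/(C/Δt + G), 0, 0], [0, 0, 0]]. Then the spectral radius of P equals √(L₂/L₁ + Δt²/(L₁(C + GΔt))) and is strictly greater than 1; hence the dynamic iteration diverges for every choice of positive time step Δt. -/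
open Matrix

/-- For the second RLC circuit example with `L₂ ≥ L₁`, the spectral radius of
the interface error operator `P` equals `√(L₂/L₁ + Δt²/(L₁(C + GΔt)))` and is
strictly greater than `1`: the dynamic iteration diverges for every positive
time step. -/
theorem second_example_diverges_of_L2_ge_L1
    (Δt L₁ L₂ C G : ℝ) (hΔt : 0 < Δt) (hL₁ : 0 < L₁) (hL₂ : 0 < L₂)
    (hC : 0 < C) (hG : 0 < G) (hL : L₁ ≤ L₂)
    (P : Matrix (Fin 3) (Fin 3) ℝ)
    (hP : P = !![0, -Δt / L₁, Δt / L₁;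
                 (L₂ * C / Δt ^ 2 + L₂ * G / Δt + 1) / (C / Δt + G), 0, 0;
                 0, 0, 0]) :
    spectralRadius ℂ (P.map (algebraMap ℝ ℂ)) =
        ENNReal.ofReal (Real.sqrt (L₂ / L₁ + Δt ^ 2 / (L₁ * (C + G * Δt)))) ∧
    1 < spectralRadius ℂ (P.map (algebraMap ℝ ℂ)) := by
  subst hP
  have hΔt' : Δt ≠ 0 := hΔt.ne'
  have hL₁' : L₁ ≠ 0 := hL₁.ne'
  have hden : C / Δt + G ≠ 0 := by positivity
  have hden2 : C + G * Δt ≠ 0 := by positivity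
  set s : ℝ := L₂ / L₁ + Δt ^ 2 / (L₁ * (C + G * Δt)) with hs_def
  have hk : Δt / L₁ * ((L₂ * C / Δt ^ 2 + L₂ * G / Δt + 1) / (C / Δt + G)) = s := by
    rw [hs_def]; field_simp
  have hs1 : 1 < s := by
    have h1 : 1 ≤ L₂ / L₁ := (one_le_div hL₁).2 hL
    have h2 : 0 < Δt ^ 2 / (L₁ * (C + G * Δt)) := by positivity
    rw [hs_def]; linarith
  have hs0 : (0:ℝ) ≤ s := by linarith
  set r : ℝ := Real.sqrt s with hr_def
  have hr2 : r ^ 2 = s := Real.sq_sqrt hs0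
  have hr1 : (1:ℝ) < r := by
    rw [hr_def, show (1:ℝ) = Real.sqrt 1 by simp]
    exact Real.sqrt_lt_sqrt (by norm_num) hs1
  have hr0 : (0:ℝ) ≤ r := Real.sqrt_nonneg _
  have key : ∀ μ : ℂ, μ ∈ spectrum ℂ ((!![0, -Δt / L₁, Δt / L₁;
        (L₂ * C / Δt ^ 2 + L₂ * G / Δt + 1) / (C / Δt + G), 0, 0;
        0, 0, 0] : Matrix (Fin 3) (Fin 3) ℝ).map (algebraMap ℝ ℂ)) ↔
      μ = 0 ∨ μ = Complex.I * r ∨ μ = -(Complex.I * r) := by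
    intro μ
    have step : μ ∈ spectrum ℂ ((!![0, -Δt / L₁, Δt / L₁;
          (L₂ * C / Δt ^ 2 + L₂ * G / Δt + 1) / (C / Δt + G), 0, 0;
          0, 0, 0] : Matrix (Fin 3) (Fin 3) ℝ).map (algebraMap ℝ ℂ)) ↔
        μ ^ 3 + ((Δt / L₁ * ((L₂ * C / Δt ^ 2 + L₂ * G / Δt + 1) / (C / Δt + G))) : ℝ) * μ
          = 0 := by
      rw [spectrum.mem_iff, Matrix.isUnit_iff_isUnit_det, isUnit_iff_ne_zero, not_not,
        Matrix.det_fin_three]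
      simp [Matrix.algebraMap_matrix_apply, Matrix.map_apply, Matrix.vecHead, Matrix.vecTail]
      constructor
      · intro h; rw [← h]; ring
      · intro h; rw [← h]; ring
    rw [step, hk]
    have hrs : (Complex.I * (r : ℂ)) ^ 2 = -(s : ℂ) := by
      rw [mul_pow, Complex.I_sq]
      rw [show ((r:ℂ))^2 = ((r^2 : ℝ) : ℂ) by push_cast; ring, hr2]
      ring
    have factored : μ ^ 3 + (s : ℂ) * μ
        = μ * (μ - Complex.I * r) * (μ + Complex.I * r) := by
      rw [show (s : ℂ) = -((Complex.I * (r:ℂ)) ^ 2) by rw [hrs]; ring]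
      ring
    rw [factored]
    constructor
    · intro h
      rcases mul_eq_zero.mp h with h | h
      · rcases mul_eq_zero.mp h with h | h
        · exact Or.inl h
        · exact Or.inr (Or.inl (sub_eq_zero.mp h))
      · exact Or.inr (Or.inr (eq_neg_of_add_eq_zero_left h))
    · rintro (h | h | h) <;> subst h <;> ring
  have hspec : spectrum ℂ ((!![0, -Δt / L₁, Δt / L₁;
        (L₂ * C / Δt ^ 2 + L₂ * G / Δt + 1) / (C / Δt + G), 0, 0;
        0, 0, 0] : Matrix (Fin 3) (Fin 3) ℝ).map (algebraMap ℝ ℂ))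
      = ({0, Complex.I * r, -(Complex.I * r)} : Set ℂ) :=
    Set.ext fun μ => (key μ).trans (by simp [Set.mem_insert_iff])
  have hnorm : ‖Complex.I * (r : ℂ)‖ = r := by
    rw [norm_mul, Complex.norm_I, one_mul, Complex.norm_real, Real.norm_of_nonneg hr0]
  have hsup : spectralRadius ℂ ((!![0, -Δt / L₁, Δt / L₁;
        (L₂ * C / Δt ^ 2 + L₂ * G / Δt + 1) / (C / Δt + G), 0, 0;
        0, 0, 0] : Matrix (Fin 3) (Fin 3) ℝ).map (algebraMap ℝ ℂ))
      = (‖Complex.I * (r : ℂ)‖₊ : ENNReal) := by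
    rw [spectralRadius, hspec]
    rw [iSup_insert, iSup_insert, iSup_singleton, nnnorm_neg, nnnorm_zero]
    simp
  have heq : spectralRadius ℂ ((!![0, -Δt / L₁, Δt / L₁;
        (L₂ * C / Δt ^ 2 + L₂ * G / Δt + 1) / (C / Δt + G), 0, 0;
        0, 0, 0] : Matrix (Fin 3) (Fin 3) ℝ).map (algebraMap ℝ ℂ))
      = ENNReal.ofReal r := by
    rw [hsup, ← enorm_eq_nnnorm, ← ofReal_norm, hnorm]
  refine ⟨heq, ?_⟩
  rw [heq, ← ENNReal.ofReal_one]
  exact (ENNReal.ofReal_lt_ofReal_iff (by linarith)).2 hr1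
end

section
/- Let Δt, L₁, L₂, C, G be positive real numbers with L₂ < L₁, let P be the 3×3 real matrix P = [[0, −Δt/L₁, Δt/L₁], [(L₂C/Δt² + L₂G/Δt + 1)/(C/Δt + G), 0, 0], [0, 0, 0]], and set Δt₀ := ((L₁ − L₂)G + √((L₁ − L₂)²G² + 4(L₁ − L₂)C))/2. Then the spectral radius of P equals √(L₂/L₁ + Δt²/(L₁(C + GΔt))), and: ρ(P) < 1 if and only if Δt < Δt₀; ρ(P) = 1 if and only if Δt = Δt₀; and ρ(P) > 1 if and only if Δt > Δt₀. -/
open Matrix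

/-- For the second RLC circuit example with `L₂ < L₁`, the spectral radius of
the interface error operator equals `√(L₂/L₁ + Δt²/(L₁(C + GΔt)))`, and the
convergence/stagnation/divergence trichotomy holds with the critical time step
`Δt₀ = ((L₁ − L₂)G + √((L₁ − L₂)²G² + 4(L₁ − L₂)C))/2`. -/
theorem second_example_spectral_radius_trichotomy
    (Δt L₁ L₂ C G : ℝ) (hΔt : 0 < Δt) (hL₁ : 0 < L₁) (hL₂ : 0 < L₂)
    (hC : 0 < C) (hG : 0 < G) (hL : L₂ < L₁)
    (P : Matrix (Fin 3) (Fin 3) ℝ)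
    (hP : P = !![0, -Δt / L₁, Δt / L₁;
                 (L₂ * C / Δt ^ 2 + L₂ * G / Δt + 1) / (C / Δt + G), 0, 0;
                 0, 0, 0])
    (Δt₀ : ℝ)
    (hΔt₀ : Δt₀ = ((L₁ - L₂) * G +
        Real.sqrt ((L₁ - L₂) ^ 2 * G ^ 2 + 4 * (L₁ - L₂) * C)) / 2) :
    spectralRadius ℂ (P.map (algebraMap ℝ ℂ)) =
        ENNReal.ofReal (Real.sqrt (L₂ / L₁ + Δt ^ 2 / (L₁ * (C + G * Δt)))) ∧
    (spectralRadius ℂ (P.map (algebraMap ℝ ℂ)) < 1 ↔ Δt < Δt₀) ∧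
    (spectralRadius ℂ (P.map (algebraMap ℝ ℂ)) = 1 ↔ Δt = Δt₀) ∧
    (1 < spectralRadius ℂ (P.map (algebraMap ℝ ℂ)) ↔ Δt₀ < Δt) := by
  set c := Δt / L₁ with hc
  set b := (L₂ * C / Δt ^ 2 + L₂ * G / Δt + 1) / (C / Δt + G) with hb
  set r := L₂ / L₁ + Δt ^ 2 / (L₁ * (C + G * Δt)) with hr
  have hr0 : 0 ≤ r := by rw [hr]; positivity
  have hcb : c * b = r := by rw [hc, hb, hr]; field_simp
  set w : ℂ := Complex.I * (Real.sqrt r : ℂ) with hw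
  have hw2 : w ^ 2 = -((c : ℂ) * (b : ℂ)) := by
    have hcbC : (c : ℂ) * (b : ℂ) = (r : ℂ) := by exact_mod_cast congrArg Complex.ofReal hcb
    rw [hw, hcbC, mul_pow, Complex.I_sq, ← Complex.ofReal_pow, Real.sq_sqrt hr0]; ring
  have hmap : P.map (algebraMap ℝ ℂ)
      = !![0, -(c : ℂ), (c : ℂ); (b : ℂ), 0, 0; 0, 0, 0] := by
    rw [hP]; ext i j
    fin_cases i <;> fin_cases j <;> simp [hc, hb, neg_div, Matrix.vecHead, Matrix.vecTail]
  have hspec : spectrum ℂ (P.map (algebraMap ℝ ℂ)) = {0, w, -w} := by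
    rw [hmap]; ext z
    rw [spectrum.mem_iff, Matrix.isUnit_iff_isUnit_det, isUnit_iff_ne_zero, not_ne_iff]
    have hdet : ((algebraMap ℂ (Matrix (Fin 3) (Fin 3) ℂ) z)
        - !![0, -(c : ℂ), (c : ℂ); (b : ℂ), 0, 0; 0, 0, 0]).det
        = z * (z - w) * (z + w) := by
      simp [Matrix.det_fin_three, Matrix.algebraMap_matrix_apply, Matrix.vecHead,
        Matrix.vecTail]
      linear_combination z * hw2
    rw [hdet]
    simp only [Set.mem_insert_iff, Set.mem_singleton_iff, mul_eq_zero]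
    constructor
    · rintro ((h | h) | h)
      · exact Or.inl h
      · exact Or.inr (Or.inl (sub_eq_zero.mp h))
      · exact Or.inr (Or.inr (eq_neg_of_add_eq_zero_left h))
    · rintro (rfl | rfl | rfl) <;> simp
  have hrad : spectralRadius ℂ (P.map (algebraMap ℝ ℂ)) = ENNReal.ofReal (Real.sqrt r) := by
    rw [spectralRadius, hspec,
      show ({0, w, -w} : Set ℂ) = insert 0 (insert w {-w}) from rfl,
      iSup_insert, iSup_insert, iSup_singleton]
    simp only [nnnorm_zero, ENNReal.coe_zero, nnnorm_neg, zero_le, sup_of_le_right, sup_idem]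
    rw [← enorm_eq_nnnorm, ← ofReal_norm]
    congr 1
    rw [hw]; simp [abs_of_nonneg, Real.sqrt_nonneg]
  -- real arithmetic trichotomy
  set K := L₁ - L₂ with hK
  have hKpos : 0 < K := by linarith
  set s := Real.sqrt (K ^ 2 * G ^ 2 + 4 * K * C) with hs
  have hD : (0:ℝ) ≤ K ^ 2 * G ^ 2 + 4 * K * C := by positivity
  have hs2 : s ^ 2 = K ^ 2 * G ^ 2 + 4 * K * C := by rw [hs]; exact Real.sq_sqrt hD
  have hsgt : K * G < s := by
    rw [hs, show K ^ 2 * G ^ 2 = (K * G) ^ 2 by ring]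
    nlinarith [Real.sq_sqrt (show (0:ℝ) ≤ (K * G) ^ 2 + 4 * K * C by positivity),
      Real.sqrt_nonneg ((K * G) ^ 2 + 4 * K * C)]
  clear_value K s
  have hq : (Δt - Δt₀) * (Δt + (s - K * G) / 2) = Δt ^ 2 - K * G * Δt - K * C := by
    rw [hΔt₀]; linear_combination (-(1:ℝ)/4) * hs2
  have hden : 0 < L₁ * (C + G * Δt) := by positivity
  have key : r - 1 = (Δt ^ 2 - K * G * Δt - K * C) / (L₁ * (C + G * Δt)) := by
    rw [hr, hK]; field_simp; ring
  have hsg : 0 < s - K * G := by linarith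
  have hfac : 0 < Δt + (s - K * G) / 2 := by linarith
  have hlt : Δt < Δt₀ → r < 1 := by
    intro h
    have h1 : (Δt - Δt₀) * (Δt + (s - K * G) / 2) < 0 :=
      mul_neg_of_neg_of_pos (by linarith) hfac
    rw [hq] at h1
    have h2 := div_neg_of_neg_of_pos h1 hden
    rw [← key] at h2; linarith
  have heq : Δt = Δt₀ → r = 1 := by
    intro h
    have h0 : (Δt - Δt₀) * (Δt + (s - K * G) / 2) = 0 := by rw [h]; ring
    rw [hq] at h0
    have h2 : r - 1 = 0 := by rw [key, h0, zero_div]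
    linarith
  have hgt : Δt₀ < Δt → 1 < r := by
    intro h
    have h1 : 0 < (Δt - Δt₀) * (Δt + (s - K * G) / 2) := mul_pos (by linarith) hfac
    rw [hq] at h1
    have h2 := div_pos h1 hden
    rw [← key] at h2; linarith
  have ilt : r < 1 ↔ Δt < Δt₀ := by
    refine ⟨fun h => ?_, hlt⟩
    rcases lt_trichotomy Δt Δt₀ with h' | h' | h'
    · exact h'
    · exact absurd (heq h') (by linarith)
    · exact absurd (hgt h') (by linarith)
  have ieq : r = 1 ↔ Δt = Δt₀ := by
    refine ⟨fun h => ?_, heq⟩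
    rcases lt_trichotomy Δt Δt₀ with h' | h' | h'
    · exact absurd (hlt h') (by linarith)
    · exact h'
    · exact absurd (hgt h') (by linarith)
  have igt : 1 < r ↔ Δt₀ < Δt := by
    refine ⟨fun h => ?_, hgt⟩
    rcases lt_trichotomy Δt Δt₀ with h' | h' | h'
    · exact absurd (hlt h') (by linarith)
    · exact absurd (heq h') (by linarith)
    · exact h'
  refine ⟨hrad, ?_, ?_, ?_⟩
  · rw [hrad, ← ENNReal.ofReal_one,
      ENNReal.ofReal_lt_ofReal_iff one_pos, show (1:ℝ) = Real.sqrt 1 by simp,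
      Real.sqrt_lt_sqrt_iff hr0]
    simpa using ilt
  · rw [hrad, ← ENNReal.ofReal_one,
      ENNReal.ofReal_eq_ofReal_iff (Real.sqrt_nonneg r) zero_le_one,
      Real.sqrt_eq_one]
    exact ieq
  · have hsq : 0 < Real.sqrt r := Real.sqrt_pos.mpr (by rw [hr]; positivity)
    rw [hrad, ← ENNReal.ofReal_one, ENNReal.ofReal_lt_ofReal_iff hsq,
      show (1:ℝ) = Real.sqrt 1 by simp, Real.sqrt_lt_sqrt_iff zero_le_one]
    simpa using igt
end
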